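/- Let J ⊆ R be a binomial ideal and let ξ, η ∈ W be two points with the same set of vanishing coordinates, i.e. {i : ξ_i = 0} = {i : η_i = 0}. Then Eord_ξ(J) = Eord_η(J). (The E-order is constant along the points of each stratum E^0_Λ of the stratification of the ambient space defined by the normal crossing divisor E of coordinate hyperplanes.) -/

import Mathlib

open MvPolynomial

noncomputable section

/-- The variable index type: `x`-variables indexed by `Fin s`, `y`-variables by `Fin r`. -/
abbrev BV (s r : ℕ) : Type := Fin s ⊕ Fin r

/-- The polynomial ring `R = K[x_1,…,x_s,y_1,…,y_r]`. -/
abbrev BR (K : Type) [Field K] (s r : ℕ) : Type := MvPolynomial (BV s r) K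

variable (K : Type) [Field K] (s r : ℕ)

/-- `W`: the set of points all of whose `y`-coordinates are nonzero. -/
def Wset : Set (BV s r → K) := {ξ | ∀ j : Fin r, ξ (Sum.inr j) ≠ 0}

/-- `I_ξ`: the ideal generated by the variables vanishing at `ξ`. -/
def Ivan (ξ : BV s r → K) : Ideal (BR K s r) :=
  Ideal.span {p : BR K s r | ∃ i : BV s r, ξ i = 0 ∧ p = X i}

/-- `m_ξ`: the maximal ideal of polynomials vanishing at `ξ`. -/
def mAt (ξ : BV s r → K) : Ideal (BR K s r) := RingHom.ker (eval ξ)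

instance mAt_isMaximal (ξ : BV s r → K) : (mAt K s r ξ).IsMaximal :=
  RingHom.ker_isMaximal_of_surjective _ (fun a => ⟨C a, eval_C a⟩)

/-- `O_ξ`: the localization of `R` at `m_ξ`. -/
abbrev Oloc (ξ : BV s r → K) : Type := Localization.AtPrime (mAt K s r ξ)

/-- The `E`-order of an ideal `J` at a point `ξ`:
`sup { m : J·O_ξ ⊆ (I_ξ·O_ξ)^m }`. -/
def Eord (ξ : BV s r → K) (J : Ideal (BR K s r)) : ℕ∞ :=
  sSup ((fun m : ℕ => (m : ℕ∞)) ''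
    {m : ℕ | J.map (algebraMap (BR K s r) (Oloc K s r ξ)) ≤
      ((Ivan K s r ξ).map (algebraMap (BR K s r) (Oloc K s r ξ))) ^ m})

/-- The order of an ideal `J` at a point `ξ`:
`sup { m : J·O_ξ ⊆ (m_ξ·O_ξ)^m }`. -/
def ordAt (ξ : BV s r → K) (J : Ideal (BR K s r)) : ℕ∞ :=
  sSup ((fun m : ℕ => (m : ℕ∞)) ''
    {m : ℕ | J.map (algebraMap (BR K s r) (Oloc K s r ξ)) ≤
      ((mAt K s r ξ).map (algebraMap (BR K s r) (Oloc K s r ξ))) ^ m})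

/-- `x^α`. -/
def xPow (α : Fin s → ℕ) : BR K s r := ∏ i, X (Sum.inl i) ^ α i

/-- `y^γ` for `γ ∈ ℕ^r`. -/
def yPow (γ : Fin r → ℕ) : BR K s r := ∏ j, X (Sum.inr j) ^ γ j

/-- positive part `γ₊` of `γ ∈ ℤ^r`. -/
def ipos (γ : Fin r → ℤ) : Fin r → ℕ := fun j => (γ j).toNat

/-- negative part `γ₋` of `γ ∈ ℤ^r`. -/
def ineg (γ : Fin r → ℤ) : Fin r → ℕ := fun j => (-(γ j)).toNat

/-- a non-hyperbolic binomial `y^{γ₊}x^α − b·y^{γ₋}x^β`. -/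
def nhb (γ : Fin r → ℤ) (α β : Fin s → ℕ) (b : K) : BR K s r :=
  yPow K s r (ipos r γ) * xPow K s r α - C b * yPow K s r (ineg r γ) * xPow K s r β

/-- a hyperbolic equation `y^{δ₋} − μ·y^{δ₊}`. -/
def hyp (δ : Fin r → ℤ) (μ : K) : BR K s r :=
  yPow K s r (ineg r δ) - C μ * yPow K s r (ipos r δ)

/-- a generator of a binomial ideal:
`x^λ(y^{δ₋} − μ y^{δ₊})` or `x^ν(y^{γ₊}x^α − b y^{γ₋}x^β)` with `α,β` of disjoint supports. -/
def IsBinomGen (g : BR K s r) : Prop :=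
  (∃ (lam : Fin s → ℕ) (δ : Fin r → ℤ) (μ : K),
      g = xPow K s r lam * hyp K s r δ μ) ∨
  (∃ (ν α β : Fin s → ℕ) (γ : Fin r → ℤ) (b : K),
      (∀ i, α i = 0 ∨ β i = 0) ∧ g = xPow K s r ν * nhb K s r γ α β b)

/-- a binomial ideal: an ideal generated by finitely many binomial generators. -/
def IsBinomialIdeal (J : Ideal (BR K s r)) : Prop :=
  ∃ S : Finset (BR K s r), (∀ g ∈ S, IsBinomGen K s r g) ∧ J = Ideal.span (S : Set (BR K s r))

open Classical in
/-- `|ν|_ξ = Σ_{i : ξ_i = 0} ν_i` (sum over vanishing x-coordinates). -/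
def nsumAt (ξ : BV s r → K) (ν : Fin s → ℕ) : ℕ :=
  ∑ i, if ξ (Sum.inl i) = 0 then ν i else 0


/-- `Option A ⊕ B ≃ Option (A ⊕ B)`. -/
def optSum (A B : Type) : Option A ⊕ B ≃ Option (A ⊕ B) :=
  ((Equiv.optionEquivSumPUnit A).sumCongr (Equiv.refl B)).trans <|
    (Equiv.sumAssoc A PUnit.{1} B).trans <|
      ((Equiv.refl A).sumCongr (Equiv.sumComm PUnit.{1} B)).trans <|
        (Equiv.sumAssoc A B PUnit.{1}).symm.trans
          (Equiv.optionEquivSumPUnit (A ⊕ B)).symm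

/-- The variables of `K[x_1,…,x_{s+1},y]` split as the variable `x_1` (the `none` case)
and the variables of `K[x_2,…,x_{s+1},y]`. -/
def varEquiv : BV (s + 1) r ≃ Option (BV s r) :=
  ((finSuccEquiv s).sumCongr (Equiv.refl (Fin r))).trans (optSum (Fin s) (Fin r))

/-- Identification of `R = K[x_1,…,x_{s+1},y]` with `R'[x_1]`, `R' = K[x_2,…,x_{s+1},y]`. -/
def toPoly : BR K (s + 1) r ≃ₐ[K] Polynomial (BR K s r) :=
  (renameEquiv K (varEquiv s r)).trans (optionEquivLeft K (BV s r))

/-- `a_{f,k}`: the coefficient of `x_1^k` in `f` under the identification `R = R'[x_1]`. -/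
def coeffAt (f : BR K (s + 1) r) (k : ℕ) : BR K s r :=
  (toPoly K s r f).coeff k

/-- The coefficient ideal `C(P,c)` of `P` along `E` with respect to `V = {x_1 = 0}`,
with factorial normalization: it is generated by the `a_{f,k}^{c!/(c-k)}`, `f ∈ P`, `k < c`. -/
def coeffIdeal (P : Ideal (BR K (s + 1) r)) (c : ℕ) : Ideal (BR K s r) :=
  Ideal.span {g : BR K s r |
    ∃ f ∈ P, ∃ k < c, g = coeffAt K s r f k ^ (Nat.factorial c / (c - k))}

/-- `ξ'`: the point `ξ` with its first (`x_1`) coordinate removed. -/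
def resPt (ξ : BV (s + 1) r → K) : BV s r → K :=
  fun v => match v with
  | Sum.inl i => ξ (Sum.inl i.succ)
  | Sum.inr j => ξ (Sum.inr j)

open Classical in
/-- The chart morphism `σ_j` of the blow-up along `Z = ∩_{i ∈ I} {x_i = 0}`:
`x_i ↦ x_i·x_j` for `i ∈ I ∖ {j}`, all other variables are fixed. -/
def chart (I : Finset (Fin s)) (j : Fin s) : BR K s r →ₐ[K] BR K s r :=
  aeval (fun v : BV s r => match v with
    | Sum.inl i => if i ∈ I ∧ i ≠ j then X (Sum.inl i) * X (Sum.inl j) else X (Sum.inl i)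
    | Sum.inr k => X (Sum.inr k))

end


noncomputable section EordAux

open MvPolynomial

variable (K : Type) [Field K] (s r : ℕ) (ξ : BV s r → K)

open Classical in
def wdegA (μ : BV s r →₀ ℕ) : ℕ := μ.sum fun i e => if ξ i = 0 then e else 0

open Classical in
def psiA : BR K s r →ₐ[K] Polynomial (BR K s r) :=
  aeval (fun i => if ξ i = 0 then Polynomial.X * Polynomial.C (X i) else Polynomial.C (X i))

open Classical in
lemma wdegA_add (μ ν : BV s r →₀ ℕ) :
    wdegA K s r ξ (μ + ν) = wdegA K s r ξ μ + wdegA K s r ξ ν :=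
  Finsupp.sum_add_index' (fun i => by simp) (fun i b c => by split <;> simp)

open Classical in
lemma psiA_monomial (μ : BV s r →₀ ℕ) (c : K) :
    psiA K s r ξ (monomial μ c)
      = Polynomial.C (monomial μ c) * Polynomial.X ^ wdegA K s r ξ μ := by
  rw [psiA, aeval_monomial, monomial_eq, wdegA, Finsupp.prod, Finsupp.sum]
  rw [Finset.prod_congr rfl (g := fun i =>
      Polynomial.C (X i ^ μ i : BR K s r) * Polynomial.X ^ (if ξ i = 0 then μ i else 0))
      (fun i _ => by
        beta_reduce
        by_cases h : ξ i = 0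
        · rw [if_pos h, if_pos h, mul_pow, ← map_pow, mul_comm]
        · rw [if_neg h, if_neg h, ← map_pow, pow_zero, mul_one])]
  rw [Finset.prod_mul_distrib, Finset.prod_pow_eq_pow_sum, ← map_prod, Finsupp.prod]
  simp [Polynomial.algebraMap_apply, MvPolynomial.algebraMap_eq]
  ring

open Classical in
lemma coeff_coeff_psiA (g : BR K s r) (μ : BV s r →₀ ℕ) :
    MvPolynomial.coeff μ ((psiA K s r ξ g).coeff (wdegA K s r ξ μ))
      = MvPolynomial.coeff μ g := by
  conv_lhs => rw [g.as_sum]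
  rw [map_sum, Polynomial.finset_sum_coeff]
  have hterm : ∀ ν ∈ g.support,
      (psiA K s r ξ (monomial ν (coeff ν g))).coeff (wdegA K s r ξ μ)
        = monomial ν (coeff ν g) * (if wdegA K s r ξ μ = wdegA K s r ξ ν then 1 else 0) := by
    intro ν _
    rw [psiA_monomial, Polynomial.coeff_C_mul, Polynomial.coeff_X_pow]
  rw [Finset.sum_congr rfl hterm]
  rw [MvPolynomial.coeff_sum]
  rw [Finset.sum_eq_single μ]
  · by_cases h : μ ∈ g.support
    · simp
    · simp [MvPolynomial.notMem_support_iff.mp h]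
  · intro ν _ hν
    rw [MvPolynomial.coeff_mul]
    apply Finset.sum_eq_zero
    rintro ⟨a, b⟩ hab
    rw [Finset.HasAntidiagonal.mem_antidiagonal] at hab
    by_cases ha : a = ν
    · have hb : b ≠ 0 ∨ True := Or.inr trivial
      -- b = μ - ν, but coeff of the ite-constant at nonzero b:
      subst ha
      have hbne : b ≠ 0 := by
        rintro rfl; rw [add_zero] at hab; exact hν hab
      have : MvPolynomial.coeff b ((if wdegA K s r ξ μ = wdegA K s r ξ a then (1:BR K s r) else 0)) = 0 := by
        split <;> simp [MvPolynomial.coeff_one, hbne, Ne.symm hbne]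
      rw [this, mul_zero]
    · rw [MvPolynomial.coeff_monomial, if_neg (fun hh => ha hh.symm), zero_mul]
  · intro hμ
    simp [MvPolynomial.notMem_support_iff.mp hμ]

open Classical in
lemma monomial_mem_pow : ∀ (m : ℕ) (μ : BV s r →₀ ℕ) (c : K), m ≤ wdegA K s r ξ μ →
    monomial μ c ∈ (Ivan K s r ξ) ^ m := by
  intro m
  induction m with
  | zero => intro μ c _; simp
  | succ m ih =>
    intro μ c h
    obtain ⟨i, hi0, hiμ⟩ : ∃ i, ξ i = 0 ∧ μ i ≠ 0 := by
      by_contra hc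
      push_neg at hc
      have : wdegA K s r ξ μ = 0 := by
        rw [wdegA, Finsupp.sum]
        apply Finset.sum_eq_zero
        intro i hi
        by_cases hh : ξ i = 0
        · rw [if_pos hh, hc i hh]
        · rw [if_neg hh]
      omega
    have hle : Finsupp.single i 1 ≤ μ := by
      rw [Finsupp.single_le_iff]; omega
    have hdecomp : (μ - Finsupp.single i 1) + Finsupp.single i 1 = μ :=
      tsub_add_cancel_of_le hle
    have hwd : wdegA K s r ξ (Finsupp.single i 1) = 1 := by
      rw [wdegA, Finsupp.sum_single_index (by simp), if_pos hi0]
    have hw' : m ≤ wdegA K s r ξ (μ - Finsupp.single i 1) := by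
      have := wdegA_add K s r ξ (μ - Finsupp.single i 1) (Finsupp.single i 1)
      rw [hdecomp, hwd] at this
      omega
    have hX : (X i : BR K s r) ∈ Ivan K s r ξ :=
      Ideal.subset_span ⟨i, hi0, rfl⟩
    have : monomial μ c = monomial (μ - Finsupp.single i 1) c * X i := by
      rw [X, monomial_mul, mul_one, hdecomp]
    rw [this, pow_succ]
    exact Ideal.mul_mem_mul (ih _ _ hw') hX

open Classical in
lemma mem_pow_of_psiA_dvd (g : BR K s r) (m : ℕ)
    (h : Polynomial.X ^ m ∣ psiA K s r ξ g) : g ∈ (Ivan K s r ξ) ^ m := by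
  nth_rewrite 1 [g.as_sum]
  apply Ideal.sum_mem
  intro μ hμ
  apply monomial_mem_pow
  by_contra hlt
  push_neg at hlt
  have h0 := Polynomial.X_pow_dvd_iff.mp h _ hlt
  have := coeff_coeff_psiA K s r ξ g μ
  rw [h0] at this
  rw [MvPolynomial.mem_support_iff] at hμ
  exact hμ (by simpa using this.symm)

open Classical in
lemma psiA_dvd_of_mem_pow (g : BR K s r) (m : ℕ) (hg : g ∈ (Ivan K s r ξ) ^ m) :
    Polynomial.X ^ m ∣ psiA K s r ξ g := by
  rw [← Ideal.mem_span_singleton, ← Ideal.span_singleton_pow]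
  have h1 : Ivan K s r ξ ≤
      Ideal.comap (psiA K s r ξ).toRingHom (Ideal.span {(Polynomial.X : Polynomial (BR K s r))}) := by
    rw [Ivan, Ideal.span_le]
    rintro p ⟨i, hi, rfl⟩
    show psiA K s r ξ (X i) ∈ Ideal.span {(Polynomial.X : Polynomial (BR K s r))}
    rw [psiA, aeval_X, if_pos hi, Ideal.mem_span_singleton]
    exact Dvd.intro _ rfl
  have h2 := Ideal.pow_right_mono h1 m hg
  have h3 : (Ideal.comap (psiA K s r ξ).toRingHom
        (Ideal.span {(Polynomial.X : Polynomial (BR K s r))})) ^ m ≤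
      Ideal.comap (psiA K s r ξ).toRingHom
        ((Ideal.span {(Polynomial.X : Polynomial (BR K s r))}) ^ m) := by
    rw [← Ideal.map_le_iff_le_comap, Ideal.map_pow]
    exact Ideal.pow_right_mono Ideal.map_comap_le m
  exact h3 h2

open Classical in
lemma eval_zero_psiA (g : BR K s r) :
    eval ξ (Polynomial.eval 0 (psiA K s r ξ g)) = eval ξ g := by
  have key : ((eval ξ).comp ((Polynomial.evalRingHom (0 : BR K s r)).comp
      (psiA K s r ξ).toRingHom)) = eval ξ := by
    apply MvPolynomial.ringHom_ext
    · intro a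
      simp [psiA, MvPolynomial.algebraMap_eq, Polynomial.algebraMap_apply]
    · intro i
      by_cases h : ξ i = 0 <;>
        simp [psiA, h]
  exact DFunLike.congr_fun key g

open Classical in
lemma mem_pow_of_mul_mem (u f : BR K s r) (m : ℕ)
    (hu : eval ξ u ≠ 0) (h : u * f ∈ (Ivan K s r ξ) ^ m) : f ∈ (Ivan K s r ξ) ^ m := by
  apply mem_pow_of_psiA_dvd
  have hdvd : Polynomial.X ^ m ∣ psiA K s r ξ u * psiA K s r ξ f := by
    rw [← map_mul]
    exact psiA_dvd_of_mem_pow K s r ξ _ m h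
  refine (Polynomial.prime_X).pow_dvd_of_dvd_mul_left m ?_ hdvd
  rw [Polynomial.X_dvd_iff]
  intro h0
  apply hu
  rw [← eval_zero_psiA K s r ξ u, ← Polynomial.coeff_zero_eq_eval_zero, h0, map_zero]

lemma map_le_pow_iff (J : Ideal (BR K s r)) (m : ℕ) :
    J.map (algebraMap (BR K s r) (Oloc K s r ξ)) ≤
      ((Ivan K s r ξ).map (algebraMap (BR K s r) (Oloc K s r ξ))) ^ m ↔
    J ≤ (Ivan K s r ξ) ^ m := by
  rw [← Ideal.map_pow]
  constructor
  · intro h f hf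
    have hz := h (Ideal.mem_map_of_mem _ hf)
    rw [IsLocalization.mem_map_algebraMap_iff (mAt K s r ξ).primeCompl] at hz
    obtain ⟨⟨a, v⟩, hav⟩ := hz
    rw [← map_mul, IsLocalization.eq_iff_exists (mAt K s r ξ).primeCompl] at hav
    obtain ⟨c, hc⟩ := hav
    have hmem : ((c : BR K s r) * (v : BR K s r)) * f ∈ (Ivan K s r ξ) ^ m := by
      have h1 : (c : BR K s r) * (a : BR K s r) ∈ (Ivan K s r ξ) ^ m :=
        Ideal.mul_mem_left _ _ a.2
      rw [← hc] at h1
      convert h1 using 1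
      ring
    refine mem_pow_of_mul_mem K s r ξ _ _ _ ?_ hmem
    rw [map_mul]
    have hcne : eval ξ (c : BR K s r) ≠ 0 := fun hh => c.2 hh
    have hvne : eval ξ (v : BR K s r) ≠ 0 := fun hh => v.2 hh
    exact mul_ne_zero hcne hvne
  · exact fun h => Ideal.map_mono h

end EordAux

/-- the `E`-order of a binomial ideal is constant along the points of each
stratum of the stratification defined by the coordinate hyperplanes: if `ξ, η ∈ W` have
the same vanishing coordinates, then `Eord_ξ(J) = Eord_η(J)`. -/
theorem Eord_constant_on_strata
    (K : Type) [Field K] [IsAlgClosed K] (s r : ℕ)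
    (J : Ideal (BR K s r)) (hJ : IsBinomialIdeal K s r J)
    (ξ η : BV s r → K) (hξ : ξ ∈ Wset K s r) (hη : η ∈ Wset K s r)
    (hsame : ∀ i : BV s r, ξ i = 0 ↔ η i = 0) :
    Eord K s r ξ J = Eord K s r η J := by
  have hIvan : Ivan K s r ξ = Ivan K s r η := by
    unfold Ivan
    congr 1
    ext p
    constructor
    · rintro ⟨i, h0, rfl⟩; exact ⟨i, (hsame i).mp h0, rfl⟩
    · rintro ⟨i, h0, rfl⟩; exact ⟨i, (hsame i).mpr h0, rfl⟩
  have hset : {m : ℕ | J.map (algebraMap (BR K s r) (Oloc K s r ξ)) ≤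
        ((Ivan K s r ξ).map (algebraMap (BR K s r) (Oloc K s r ξ))) ^ m} =
      {m : ℕ | J.map (algebraMap (BR K s r) (Oloc K s r η)) ≤
        ((Ivan K s r η).map (algebraMap (BR K s r) (Oloc K s r η))) ^ m} := by
    ext m
    rw [Set.mem_setOf_eq, Set.mem_setOf_eq, map_le_pow_iff, map_le_pow_iff, hIvan]
  unfold Eord
  rw [hset]
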